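/- Let G be the context-free grammar over the terminal alphabet {•, (, )} with nonterminals S and R, start symbol S, and production rules S → • | S• | (R) | S(R) and R → (•) | (R) | (S(R)) | (S•). Then: (1) the language generated from start symbol S is exactly the set of dot-bracket words of nonempty canonical secondary structures (with θ = 1); and (2) the language generated from start symbol R is exactly the set of dot-bracket words of nonempty secondary structures T (with θ = 1) such that the structure obtained from T by adding one enclosing base pair (i.e., shifting all positions of T up by one and adding the pair (1, |T| + 2)) is canonical. -/

import Mathlib

/-- The alphabet `{•, (, )}` of dot-bracket words. -/
inductive DB : Type
  | dot : DB
  | lpar : DB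
  | rpar : DB
deriving DecidableEq

/-- A secondary structure on `[1,n]` with `θ = 1`: a finite set of base pairs `(i,j)`
with `1 ≤ i`, `i + 1 < j` (i.e. `i < j` and `j - i > 1`), `j ≤ n`, no shared endpoints,
and no crossings (pseudoknots). -/
def IsSecStr (n : ℕ) (S : Finset (ℕ × ℕ)) : Prop :=
  (∀ p ∈ S, 1 ≤ p.1 ∧ p.1 + 1 < p.2 ∧ p.2 ≤ n) ∧
  (∀ p ∈ S, ∀ q ∈ S, p ≠ q →
    p.1 ≠ q.1 ∧ p.1 ≠ q.2 ∧ p.2 ≠ q.1 ∧ p.2 ≠ q.2) ∧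
  (∀ p ∈ S, ∀ q ∈ S, ¬ (p.1 < q.1 ∧ q.1 < p.2 ∧ p.2 < q.2))

/-- A secondary structure is canonical if it has no lonely base pairs. -/
def IsCanonical (S : Finset (ℕ × ℕ)) : Prop :=
  ∀ p ∈ S, (p.1 - 1, p.2 + 1) ∈ S ∨ (p.1 + 1, p.2 - 1) ∈ S

/-- The dot-bracket word of a secondary structure on `[1,n]`: position `k` (1-based)
gets `(` if it is the left end of a base pair, `)` if it is the right end,
and `•` otherwise. -/
def dotBracket (n : ℕ) (S : Finset (ℕ × ℕ)) : List DB :=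
  (List.range n).map fun k =>
    if ∃ p ∈ S, p.1 = k + 1 then DB.lpar
    else if ∃ p ∈ S, p.2 = k + 1 then DB.rpar
    else DB.dot

/-- The structure obtained from `S` (a structure on `[1,n]`) by adding one enclosing
base pair: shift all positions up by one and add the pair `(1, n + 2)`. -/
def enclose (n : ℕ) (S : Finset (ℕ × ℕ)) : Finset (ℕ × ℕ) :=
  insert (1, n + 2) (S.image fun p => (p.1 + 1, p.2 + 1))

mutual
  /-- Words derivable from the nonterminal `S` of the grammar
  `S → • | S• | (R) | S(R)`, `R → (•) | (R) | (S(R)) | (S•)`. -/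
  inductive GenS : List DB → Prop
    | dot : GenS [DB.dot]
    | app_dot (w : List DB) : GenS w → GenS (w ++ [DB.dot])
    | wrap (w : List DB) : GenR w → GenS (DB.lpar :: w ++ [DB.rpar])
    | app_wrap (v w : List DB) : GenS v → GenR w →
        GenS (v ++ DB.lpar :: w ++ [DB.rpar])
  /-- Words derivable from the nonterminal `R` of the same grammar. -/
  inductive GenR : List DB → Prop
    | pdot : GenR [DB.lpar, DB.dot, DB.rpar]
    | wrap (w : List DB) : GenR w → GenR (DB.lpar :: w ++ [DB.rpar])
    | swrap (v w : List DB) : GenS v → GenR w →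
        GenR (DB.lpar :: (v ++ DB.lpar :: w ++ [DB.rpar]) ++ [DB.rpar])
    | sdot (v : List DB) : GenS v → GenR (DB.lpar :: v ++ [DB.dot, DB.rpar])
end

-- ===== auxiliary =====

def shiftset (m : ℕ) (S : Finset (ℕ × ℕ)) : Finset (ℕ × ℕ) :=
  S.image fun p => (p.1 + m, p.2 + m)

def AlmostCan (n : ℕ) (T : Finset (ℕ × ℕ)) : Prop :=
  ∀ p ∈ T, p = (1, n) ∨ (p.1 - 1, p.2 + 1) ∈ T ∨ (p.1 + 1, p.2 - 1) ∈ T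

def dbAt (S : Finset (ℕ × ℕ)) (k : ℕ) : DB :=
  if ∃ p ∈ S, p.1 = k then DB.lpar
  else if ∃ p ∈ S, p.2 = k then DB.rpar
  else DB.dot

lemma dotBracket_eq (n : ℕ) (S : Finset (ℕ × ℕ)) :
    dotBracket n S = (List.range n).map (fun k => dbAt S (k + 1)) := rfl

lemma mem_shiftset {m : ℕ} {S : Finset (ℕ × ℕ)} {p : ℕ × ℕ} :
    p ∈ shiftset m S ↔ ∃ q ∈ S, q.1 + m = p.1 ∧ q.2 + m = p.2 := by
  simp [shiftset, Prod.ext_iff]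

lemma mem_enclose {n : ℕ} {T : Finset (ℕ × ℕ)} {p : ℕ × ℕ} :
    p ∈ enclose n T ↔ p = (1, n + 2) ∨ ∃ q ∈ T, q.1 + 1 = p.1 ∧ q.2 + 1 = p.2 := by
  simp [enclose, Prod.ext_iff, eq_comm]

lemma dbAt_congr {S T : Finset (ℕ × ℕ)} {k l : ℕ}
    (h1 : (∃ p ∈ S, p.1 = k) ↔ (∃ p ∈ T, p.1 = l))
    (h2 : (∃ p ∈ S, p.2 = k) ↔ (∃ p ∈ T, p.2 = l)) : dbAt S k = dbAt T l := by
  unfold dbAt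
  by_cases a : ∃ p ∈ T, p.1 = l
  · rw [if_pos a, if_pos (h1.2 a)]
  · rw [if_neg a, if_neg (fun h => a (h1.1 h))]
    by_cases b : ∃ p ∈ T, p.2 = l
    · rw [if_pos b, if_pos (h2.2 b)]
    · rw [if_neg b, if_neg (fun h => b (h2.1 h))]

lemma dbAt_dot {S : Finset (ℕ × ℕ)} {k : ℕ}
    (h : ∀ p ∈ S, p.1 ≠ k ∧ p.2 ≠ k) : dbAt S k = DB.dot := by
  unfold dbAt
  rw [if_neg, if_neg]
  · rintro ⟨p, hp, e⟩; exact (h p hp).2 e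
  · rintro ⟨p, hp, e⟩; exact (h p hp).1 e

lemma dotBracket_zero (S : Finset (ℕ × ℕ)) : dotBracket 0 S = [] := rfl

lemma dotBracket_empty (n : ℕ) : dotBracket n (∅ : Finset (ℕ × ℕ)) = List.replicate n DB.dot := by
  rw [dotBracket_eq, List.eq_replicate_iff]
  constructor
  · simp
  · intro b hb
    simp only [List.mem_map] at hb
    obtain ⟨a, _, rfl⟩ := hb
    exact dbAt_dot (by simp)

lemma dotBracket_snoc (n : ℕ) (S : Finset (ℕ × ℕ))
    (h : ∀ p ∈ S, p.1 ≤ n ∧ p.2 ≤ n) :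
    dotBracket (n + 1) S = dotBracket n S ++ [DB.dot] := by
  rw [dotBracket_eq, dotBracket_eq, List.range_succ, List.map_append]
  congr 1
  simp only [List.map_cons, List.map_nil, List.cons.injEq, and_true]
  exact dbAt_dot (fun p hp => ⟨by have := (h p hp).1; omega, by have := (h p hp).2; omega⟩)

lemma dotBracket_union (m k : ℕ) (A B : Finset (ℕ × ℕ))
    (hA : ∀ p ∈ A, p.1 ≤ m ∧ p.2 ≤ m) (hB : ∀ p ∈ B, 1 ≤ p.1 ∧ 1 ≤ p.2) :
    dotBracket (m + k) (A ∪ shiftset m B) = dotBracket m A ++ dotBracket k B := by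
  rw [dotBracket_eq, dotBracket_eq, dotBracket_eq, List.range_add, List.map_append,
    List.map_map]
  congr 1
  · apply List.map_congr_left
    intro a ha
    rw [List.mem_range] at ha
    apply dbAt_congr <;> constructor
    · rintro ⟨p, hp, e⟩
      rcases Finset.mem_union.1 hp with h | h
      · exact ⟨p, h, e⟩
      · obtain ⟨q, hq, e1, e2⟩ := mem_shiftset.1 h
        have := (hB q hq).1; omega
    · rintro ⟨p, hp, e⟩; exact ⟨p, Finset.mem_union_left _ hp, e⟩
    · rintro ⟨p, hp, e⟩
      rcases Finset.mem_union.1 hp with h | h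
      · exact ⟨p, h, e⟩
      · obtain ⟨q, hq, e1, e2⟩ := mem_shiftset.1 h
        have := (hB q hq).2; omega
    · rintro ⟨p, hp, e⟩; exact ⟨p, Finset.mem_union_left _ hp, e⟩
  · apply List.map_congr_left
    intro a ha
    rw [List.mem_range] at ha
    simp only [Function.comp]
    apply dbAt_congr <;> constructor
    · rintro ⟨p, hp, e⟩
      rcases Finset.mem_union.1 hp with h | h
      · have := (hA p h).1; omega
      · obtain ⟨q, hq, e1, e2⟩ := mem_shiftset.1 h
        exact ⟨q, hq, by omega⟩
    · rintro ⟨q, hq, e⟩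
      refine ⟨(q.1 + m, q.2 + m), Finset.mem_union_right _ (mem_shiftset.2 ⟨q, hq, rfl, rfl⟩), by simp; omega⟩
    · rintro ⟨p, hp, e⟩
      rcases Finset.mem_union.1 hp with h | h
      · have := (hA p h).2; omega
      · obtain ⟨q, hq, e1, e2⟩ := mem_shiftset.1 h
        exact ⟨q, hq, by omega⟩
    · rintro ⟨q, hq, e⟩
      refine ⟨(q.1 + m, q.2 + m), Finset.mem_union_right _ (mem_shiftset.2 ⟨q, hq, rfl, rfl⟩), by simp; omega⟩

lemma dotBracket_enclose (n : ℕ) (T : Finset (ℕ × ℕ))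
    (hT : ∀ p ∈ T, 1 ≤ p.1 ∧ p.1 < p.2 ∧ p.2 ≤ n) :
    dotBracket (n + 2) (enclose n T) = DB.lpar :: dotBracket n T ++ [DB.rpar] := by
  rw [dotBracket_eq, dotBracket_eq]
  rw [show n + 2 = (n + 1) + 1 from rfl, List.range_succ, List.map_append,
    List.range_succ_eq_map, List.map_cons, List.map_map]
  have h0 : dbAt (enclose n T) (0 + 1) = DB.lpar := by
    unfold dbAt
    rw [if_pos ⟨(1, n + 2), Finset.mem_insert_self _ _, rfl⟩]
  have h2 : dbAt (enclose n T) (n + 1 + 1) = DB.rpar := by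
    unfold dbAt
    rw [if_neg, if_pos ⟨(1, n + 2), Finset.mem_insert_self _ _, rfl⟩]
    rintro ⟨p, hp, e⟩
    rcases mem_enclose.1 hp with h | ⟨q, hq, e1, e2⟩
    · subst h; exact absurd (show (1:ℕ) = n + 1 + 1 from e) (by omega)
    · have := hT q hq; omega
  have h1 : List.map ((fun k => dbAt (enclose n T) (k + 1)) ∘ Nat.succ) (List.range n)
      = List.map (fun k => dbAt T (k + 1)) (List.range n) := by
    apply List.map_congr_left
    intro a ha
    rw [List.mem_range] at ha
    simp only [Function.comp]
    apply dbAt_congr <;> constructor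
    · rintro ⟨p, hp, e⟩
      rcases mem_enclose.1 hp with h | ⟨q, hq, e1, e2⟩
      · subst h; exact absurd (show (1:ℕ) = a + 1 + 1 from e) (by omega)
      · exact ⟨q, hq, by omega⟩
    · rintro ⟨q, hq, e⟩
      exact ⟨(q.1 + 1, q.2 + 1), mem_enclose.2 (Or.inr ⟨q, hq, rfl, rfl⟩), by simp; omega⟩
    · rintro ⟨p, hp, e⟩
      rcases mem_enclose.1 hp with h | ⟨q, hq, e1, e2⟩
      · subst h; exact absurd (show (n + 2:ℕ) = a + 1 + 1 from e) (by omega)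
      · exact ⟨q, hq, by omega⟩
    · rintro ⟨q, hq, e⟩
      exact ⟨(q.1 + 1, q.2 + 1), mem_enclose.2 (Or.inr ⟨q, hq, rfl, rfl⟩), by simp; omega⟩
  simp only [List.map_cons, List.map_nil, List.cons_append, h0, h2, h1]

-- ===== structure lemmas =====

lemma secstr_mono {n n' : ℕ} {S : Finset (ℕ × ℕ)} (h : n ≤ n') (hS : IsSecStr n S) :
    IsSecStr n' S :=
  ⟨fun p hp => by have := hS.1 p hp; omega, hS.2.1, hS.2.2⟩

lemma secstr_of_subset {n m : ℕ} {S T : Finset (ℕ × ℕ)} (hS : IsSecStr n S)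
    (hT : T ⊆ S) (hb : ∀ p ∈ T, p.2 ≤ m) : IsSecStr m T :=
  ⟨fun p hp => ⟨(hS.1 p (hT hp)).1, (hS.1 p (hT hp)).2.1, hb p hp⟩,
   fun p hp q hq => hS.2.1 p (hT hp) q (hT hq),
   fun p hp q hq => hS.2.2 p (hT hp) q (hT hq)⟩

lemma secstr_union {m k : ℕ} {A B : Finset (ℕ × ℕ)} (hA : IsSecStr m A)
    (hB : IsSecStr k B) : IsSecStr (m + k) (A ∪ shiftset m B) := by
  refine ⟨?_, ?_, ?_⟩
  · intro p hp
    rcases Finset.mem_union.1 hp with h | h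
    · have := hA.1 p h; omega
    · obtain ⟨q, hq, e1, e2⟩ := mem_shiftset.1 h
      have := hB.1 q hq; omega
  · intro p hp q hq hne
    rcases Finset.mem_union.1 hp with h | h <;> rcases Finset.mem_union.1 hq with h' | h'
    · exact hA.2.1 p h q h' hne
    · obtain ⟨b, hb, e1, e2⟩ := mem_shiftset.1 h'
      have h1 := hA.1 p h; have h2 := hB.1 b hb; omega
    · obtain ⟨b, hb, e1, e2⟩ := mem_shiftset.1 h
      have h1 := hA.1 q h'; have h2 := hB.1 b hb; omega
    · obtain ⟨b, hb, e1, e2⟩ := mem_shiftset.1 h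
      obtain ⟨c, hc, f1, f2⟩ := mem_shiftset.1 h'
      have hbc : b ≠ c := by
        rintro rfl
        exact hne (Prod.ext (by omega) (by omega))
      have := hB.2.1 b hb c hc hbc; omega
  · intro p hp q hq
    rcases Finset.mem_union.1 hp with h | h <;> rcases Finset.mem_union.1 hq with h' | h'
    · exact hA.2.2 p h q h'
    · obtain ⟨b, hb, e1, e2⟩ := mem_shiftset.1 h'
      have h1 := hA.1 p h; have h2 := hB.1 b hb; omega
    · obtain ⟨b, hb, e1, e2⟩ := mem_shiftset.1 h
      have h1 := hA.1 q h'; have h2 := hB.1 b hb; omega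
    · obtain ⟨b, hb, e1, e2⟩ := mem_shiftset.1 h
      obtain ⟨c, hc, f1, f2⟩ := mem_shiftset.1 h'
      have := hB.2.2 b hb c hc; omega

lemma secstr_enclose {n : ℕ} {T : Finset (ℕ × ℕ)} (hn : 1 ≤ n) (hT : IsSecStr n T) :
    IsSecStr (n + 2) (enclose n T) := by
  refine ⟨?_, ?_, ?_⟩
  · intro p hp
    rcases mem_enclose.1 hp with h | ⟨q, hq, e1, e2⟩
    · subst h; simp; omega
    · have := hT.1 q hq; omega
  · intro p hp q hq hne
    rcases mem_enclose.1 hp with h | ⟨b, hb, e1, e2⟩ <;>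
      rcases mem_enclose.1 hq with h' | ⟨c, hc, f1, f2⟩
    · exact absurd (h.trans h'.symm) hne
    · subst h; have := hT.1 c hc; simp; omega
    · subst h'; have := hT.1 b hb; simp; omega
    · have hbc : b ≠ c := by
        rintro rfl
        exact hne (Prod.ext (by omega) (by omega))
      have := hT.2.1 b hb c hc hbc; omega
  · intro p hp q hq
    rcases mem_enclose.1 hp with h | ⟨b, hb, e1, e2⟩ <;>
      rcases mem_enclose.1 hq with h' | ⟨c, hc, f1, f2⟩
    · subst h; subst h'; simp
    · subst h; have := hT.1 c hc; simp; omega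
    · subst h'; have := hT.1 b hb; simp; omega
    · have := hT.2.2 b hb c hc; omega

lemma canonical_union {A B : Finset (ℕ × ℕ)} (hA : IsCanonical A) (hB : IsCanonical B) :
    IsCanonical (A ∪ B) := by
  intro p hp
  rcases Finset.mem_union.1 hp with h | h
  · rcases hA p h with h' | h'
    · exact Or.inl (Finset.mem_union_left _ h')
    · exact Or.inr (Finset.mem_union_left _ h')
  · rcases hB p h with h' | h'
    · exact Or.inl (Finset.mem_union_right _ h')
    · exact Or.inr (Finset.mem_union_right _ h')

lemma canonical_shiftset {m : ℕ} {S : Finset (ℕ × ℕ)}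
    (hb : ∀ p ∈ S, 1 ≤ p.1 ∧ 1 ≤ p.2) (hS : IsCanonical S) :
    IsCanonical (shiftset m S) := by
  intro p hp
  obtain ⟨q, hq, e1, e2⟩ := mem_shiftset.1 hp
  have hq1 := (hb q hq).1
  have hq2 := (hb q hq).2
  rcases hS q hq with h | h
  · exact Or.inl (mem_shiftset.2 ⟨(q.1 - 1, q.2 + 1), h, by simp; omega⟩)
  · exact Or.inr (mem_shiftset.2 ⟨(q.1 + 1, q.2 - 1), h, by simp; omega⟩)

lemma almost_enclose {n : ℕ} {U : Finset (ℕ × ℕ)}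
    (hb : ∀ p ∈ U, 1 ≤ p.1 ∧ 1 ≤ p.2) (hU : IsCanonical U) :
    AlmostCan (n + 2) (enclose n U) := by
  intro p hp
  rcases mem_enclose.1 hp with h | ⟨q, hq, e1, e2⟩
  · exact Or.inl h
  · have hq1 := (hb q hq).1
    have hq2 := (hb q hq).2
    rcases hU q hq with h | h
    · exact Or.inr (Or.inl (mem_enclose.2 (Or.inr ⟨(q.1 - 1, q.2 + 1), h, by simp; omega⟩)))
    · exact Or.inr (Or.inr (mem_enclose.2 (Or.inr ⟨(q.1 + 1, q.2 - 1), h, by simp; omega⟩)))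

lemma enclose_canonical_iff {n : ℕ} {T : Finset (ℕ × ℕ)} (hT : IsSecStr n T) :
    IsCanonical (enclose n T) ↔ (1, n) ∈ T ∧ AlmostCan n T := by
  constructor
  · intro hc
    constructor
    · rcases hc (1, n + 2) (Finset.mem_insert_self _ _) with h | h
      · have h2 : ((0 : ℕ), n + 3) ∈ enclose n T := h
        rcases mem_enclose.1 h2 with h' | ⟨q, hq, e1, e2⟩
        · simp at h'
        · exact absurd e1 (by omega)
      · have h2 : ((2 : ℕ), n + 1) ∈ enclose n T := h
        rcases mem_enclose.1 h2 with h' | ⟨q, hq, e1, e2⟩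
        · simp at h'
        · have : q = (1, n) := Prod.ext (by omega) (by omega)
          rwa [← this]
    · intro p hp
      have hp1 := (hT.1 p hp).1
      have hp2 := (hT.1 p hp).2.1
      rcases hc (p.1 + 1, p.2 + 1) (mem_enclose.2 (Or.inr ⟨p, hp, rfl, rfl⟩)) with h | h
      · rcases mem_enclose.1 h with h' | ⟨q, hq, e1, e2⟩
        · have a1 := congrArg Prod.fst h'
          have a2 := congrArg Prod.snd h'
          simp at a1 a2
          exact Or.inl (Prod.ext (by omega) (by omega))
        · simp at e1 e2
          refine Or.inr (Or.inl ?_)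
          have : q = (p.1 - 1, p.2 + 1) := Prod.ext (by omega) (by omega)
          rwa [← this]
      · rcases mem_enclose.1 h with h' | ⟨q, hq, e1, e2⟩
        · have a1 := congrArg Prod.fst h'
          simp at a1
        · simp at e1 e2
          refine Or.inr (Or.inr ?_)
          have : q = (p.1 + 1, p.2 - 1) := Prod.ext (by omega) (by omega)
          rwa [← this]
  · rintro ⟨h1n, hal⟩ p hp
    rcases mem_enclose.1 hp with h | ⟨q, hq, e1, e2⟩
    · subst h
      refine Or.inr (mem_enclose.2 (Or.inr ⟨(1, n), h1n, by simp⟩))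
    · have hq1 := (hT.1 q hq).1
      have hq2 := (hT.1 q hq).2.1
      rcases hal q hq with h | h | h
      · subst h
        refine Or.inl ?_
        have : (p.1 - 1, p.2 + 1) = (1, n + 2) := Prod.ext (by simp; omega) (by simp; omega)
        rw [this]
        exact Finset.mem_insert_self _ _
      · exact Or.inl (mem_enclose.2 (Or.inr ⟨(q.1 - 1, q.2 + 1), h, by simp; omega⟩))
      · exact Or.inr (mem_enclose.2 (Or.inr ⟨(q.1 + 1, q.2 - 1), h, by simp; omega⟩))

-- ===== decomposition =====

lemma mem_Tin {i : ℕ} {S : Finset (ℕ × ℕ)} {q : ℕ × ℕ} :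
    q ∈ (S.filter fun p => i < p.1).image (fun p => (p.1 - i, p.2 - i)) ↔
      ∃ c ∈ S, i < c.1 ∧ c.1 - i = q.1 ∧ c.2 - i = q.2 := by
  simp only [Finset.mem_image, Finset.mem_filter, Prod.ext_iff]
  constructor
  · rintro ⟨c, ⟨hc, hci⟩, e1, e2⟩
    exact ⟨c, hc, hci, e1, e2⟩
  · rintro ⟨c, hc, hci, e1, e2⟩
    exact ⟨c, ⟨hc, hci⟩, e1, e2⟩

lemma secstr_Tin {n i : ℕ} {S : Finset (ℕ × ℕ)} (hS : IsSecStr n S) (hin : (i, n) ∈ S) :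
    IsSecStr (n - i - 1) ((S.filter fun p => i < p.1).image fun p => (p.1 - i, p.2 - i)) := by
  have hbn : 1 ≤ i ∧ i + 1 < n ∧ n ≤ n := hS.1 _ hin
  have hb : ∀ c ∈ S, i < c.1 → 1 ≤ c.1 ∧ c.1 + 1 < c.2 ∧ c.2 < n := by
    intro c hc h
    have h1 := hS.1 c hc
    have hne : c ≠ (i, n) := by
      intro e
      rw [e] at h
      exact absurd (show i < i from h) (by omega)
    have hd : c.1 ≠ i ∧ c.1 ≠ n ∧ c.2 ≠ i ∧ c.2 ≠ n := hS.2.1 c hc (i, n) hin hne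
    omega
  refine ⟨?_, ?_, ?_⟩
  · intro p hp
    obtain ⟨c, hc, hci, e1, e2⟩ := mem_Tin.1 hp
    have := hb c hc hci
    omega
  · intro p hp q hq hne
    obtain ⟨c, hc, hci, e1, e2⟩ := mem_Tin.1 hp
    obtain ⟨d, hd, hdi, f1, f2⟩ := mem_Tin.1 hq
    have hc' := hb c hc hci
    have hd' := hb d hd hdi
    have hcd : c ≠ d := by
      rintro rfl
      exact hne (Prod.ext (by omega) (by omega))
    have := hS.2.1 c hc d hd hcd
    omega
  · intro p hp q hq
    obtain ⟨c, hc, hci, e1, e2⟩ := mem_Tin.1 hp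
    obtain ⟨d, hd, hdi, f1, f2⟩ := mem_Tin.1 hq
    have hc' := hb c hc hci
    have hd' := hb d hd hdi
    have := hS.2.2 c hc d hd
    omega

lemma split_eq {n i : ℕ} {S : Finset (ℕ × ℕ)} (hS : IsSecStr n S) (hin : (i, n) ∈ S) :
    S = (S.filter fun p => p.2 < i) ∪ shiftset (i - 1)
      (enclose (n - i - 1) ((S.filter fun p => i < p.1).image fun p => (p.1 - i, p.2 - i))) := by
  have hbn : 1 ≤ i ∧ i + 1 < n ∧ n ≤ n := hS.1 _ hin
  ext p
  constructor
  · intro hp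
    by_cases he : p = (i, n)
    · refine Finset.mem_union_right _ (mem_shiftset.2 ⟨(1, n - i - 1 + 2),
        mem_enclose.2 (Or.inl rfl), ?_, ?_⟩) <;> rw [he] <;> simp <;> omega
    · have hd : p.1 ≠ i ∧ p.1 ≠ n ∧ p.2 ≠ i ∧ p.2 ≠ n := hS.2.1 p hp (i, n) hin he
      have hx : ¬ (p.1 < i ∧ i < p.2 ∧ p.2 < n) := hS.2.2 p hp (i, n) hin
      have hb := hS.1 p hp
      by_cases h2 : p.2 < i
      · exact Finset.mem_union_left _ (Finset.mem_filter.2 ⟨hp, h2⟩)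
      · have hgt : i < p.1 := by omega
        refine Finset.mem_union_right _ (mem_shiftset.2 ⟨(p.1 - i + 1, p.2 - i + 1),
          mem_enclose.2 (Or.inr ⟨(p.1 - i, p.2 - i),
            Finset.mem_image.2 ⟨p, Finset.mem_filter.2 ⟨hp, hgt⟩, rfl⟩, rfl, rfl⟩),
          by simp; omega, by simp; omega⟩)
  · intro hp
    rcases Finset.mem_union.1 hp with h | h
    · exact (Finset.mem_filter.1 h).1
    · obtain ⟨q, hq, e1, e2⟩ := mem_shiftset.1 h
      rcases mem_enclose.1 hq with h' | ⟨q', hq', f1, f2⟩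
      · subst h'
        have : p = (i, n) := Prod.ext (by simp at e1 ⊢; omega) (by simp at e2 ⊢; omega)
        rw [this]; exact hin
      · obtain ⟨c, hc, hci, g1, g2⟩ := mem_Tin.1 hq'
        have hbc := hS.1 c hc
        have : p = c := Prod.ext (by omega) (by omega)
        rw [this]; exact hc

lemma word_eq {n i : ℕ} {S : Finset (ℕ × ℕ)} (hS : IsSecStr n S) (hin : (i, n) ∈ S) :
    dotBracket n S = dotBracket (i - 1) (S.filter fun p => p.2 < i)
      ++ (DB.lpar :: dotBracket (n - i - 1)
        ((S.filter fun p => i < p.1).image fun p => (p.1 - i, p.2 - i)) ++ [DB.rpar]) := by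
  have hbn : 1 ≤ i ∧ i + 1 < n ∧ n ≤ n := hS.1 _ hin
  have hTin := secstr_Tin hS hin
  have hA : IsSecStr (i - 1) (S.filter fun p => p.2 < i) :=
    secstr_of_subset hS (Finset.filter_subset _ _)
      (fun p hp => by have := (Finset.mem_filter.1 hp).2; omega)
  have e1 : n = (i - 1) + ((n - i - 1) + 2) := by omega
  have key := congrArg (dotBracket ((i - 1) + ((n - i - 1) + 2))) (split_eq hS hin)
  rw [dotBracket_union _ _ _ _
      (fun p hp => by have := hA.1 p hp; omega)
      (fun p hp => by
        have := (secstr_enclose (show 1 ≤ n - i - 1 by omega) hTin).1 p hp; omega),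
    dotBracket_enclose _ _ (fun p hp => by have := hTin.1 p hp; omega)] at key
  rw [← e1] at key
  exact key

lemma canA {n i : ℕ} {S : Finset (ℕ × ℕ)} (hS : IsSecStr n S) (hin : (i, n) ∈ S)
    (hc : IsCanonical S) : IsCanonical (S.filter fun p => p.2 < i) := by
  intro p hp
  obtain ⟨hpS, hpi⟩ := Finset.mem_filter.1 hp
  have hb := hS.1 p hpS
  have hbn : 1 ≤ i ∧ i + 1 < n ∧ n ≤ n := hS.1 _ hin
  rcases hc p hpS with h | h
  · refine Or.inl (Finset.mem_filter.2 ⟨h, ?_⟩)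
    by_contra hge
    have hne : (p.1 - 1, p.2 + 1) ≠ (i, n) := by
      intro e
      have e2 : p.2 + 1 = n := congrArg Prod.snd e
      omega
    have hd : p.1 - 1 ≠ i ∧ p.1 - 1 ≠ n ∧ p.2 + 1 ≠ i ∧ p.2 + 1 ≠ n :=
      hS.2.1 _ h (i, n) hin hne
    omega
  · exact Or.inr (Finset.mem_filter.2 ⟨h, by omega⟩)

lemma canTin {n i : ℕ} {S : Finset (ℕ × ℕ)} (hS : IsSecStr n S) (hin : (i, n) ∈ S)
    (hc : IsCanonical S) :
    IsCanonical (enclose (n - i - 1)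
      ((S.filter fun p => i < p.1).image fun p => (p.1 - i, p.2 - i))) := by
  have hbn : 1 ≤ i ∧ i + 1 < n ∧ n ≤ n := hS.1 _ hin
  have hTin := secstr_Tin hS hin
  rw [enclose_canonical_iff hTin]
  constructor
  · rcases hc (i, n) hin with h | h
    · have h' : (i - 1, n + 1) ∈ S := h
      have := hS.1 _ h'
      omega
    · have h' : (i + 1, n - 1) ∈ S := h
      exact mem_Tin.2 ⟨(i + 1, n - 1), h', by omega, by omega, by omega⟩
  · intro q hq
    obtain ⟨c, hc', hci, e1, e2⟩ := mem_Tin.1 hq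
    have hbc := hS.1 c hc'
    have hc2 : c.2 < n := by
      have hne : c ≠ (i, n) := by
        intro e; rw [e] at hci; exact absurd (show i < i from hci) (by omega)
      have hd : c.1 ≠ i ∧ c.1 ≠ n ∧ c.2 ≠ i ∧ c.2 ≠ n := hS.2.1 c hc' (i, n) hin hne
      omega
    rcases hc c hc' with h | h
    · by_cases hc1 : c.1 - 1 = i
      · -- neighbour shares left endpoint with (i,n), so it is (i,n)
        by_cases he : (c.1 - 1, c.2 + 1) = (i, n)
        · have e3 : c.2 + 1 = n := congrArg Prod.snd he
          exact Or.inl (Prod.ext (by omega) (by omega))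
        · have hd : c.1 - 1 ≠ i ∧ c.1 - 1 ≠ n ∧ c.2 + 1 ≠ i ∧ c.2 + 1 ≠ n :=
            hS.2.1 _ h (i, n) hin he
          omega
      · have hgt : i < c.1 - 1 := by omega
        have hc2' : c.2 + 1 ≤ n := by
          have := hS.1 _ h; omega
        have hc2'' : c.2 + 1 ≠ n := by
          intro e
          by_cases he : (c.1 - 1, c.2 + 1) = (i, n)
          · have e4 : c.1 - 1 = i := congrArg Prod.fst he
            omega
          · have hd : c.1 - 1 ≠ i ∧ c.1 - 1 ≠ n ∧ c.2 + 1 ≠ i ∧ c.2 + 1 ≠ n :=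
              hS.2.1 _ h (i, n) hin he
            omega
        refine Or.inr (Or.inl ?_)
        have : (q.1 - 1, q.2 + 1) = ((c.1 - 1) - i, (c.2 + 1) - i) :=
          Prod.ext (by omega) (by omega)
        rw [this]
        exact mem_Tin.2 ⟨(c.1 - 1, c.2 + 1), h, by omega, by omega, by omega⟩
    · refine Or.inr (Or.inr ?_)
      have : (q.1 + 1, q.2 - 1) = ((c.1 + 1) - i, (c.2 - 1) - i) :=
        Prod.ext (by omega) (by omega)
      rw [this]
      exact mem_Tin.2 ⟨(c.1 + 1, c.2 - 1), h, by omega, by omega, by omega⟩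

lemma almostTin {n : ℕ} {T : Finset (ℕ × ℕ)} (hT : IsSecStr n T) (h1n : (1, n) ∈ T)
    (hal : AlmostCan n T) :
    AlmostCan (n - 1 - 1) ((T.filter fun p => 1 < p.1).image fun p => (p.1 - 1, p.2 - 1)) := by
  have hbn : 1 ≤ 1 ∧ 1 + 1 < n ∧ n ≤ n := hT.1 _ h1n
  intro q hq
  obtain ⟨c, hc, hci, e1, e2⟩ := mem_Tin.1 hq
  have hbc := hT.1 c hc
  have hc2 : c.2 < n := by
    have hne : c ≠ (1, n) := by
      intro e; rw [e] at hci; exact absurd (show (1:ℕ) < 1 from hci) (by omega)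
    have hd : c.1 ≠ 1 ∧ c.1 ≠ n ∧ c.2 ≠ 1 ∧ c.2 ≠ n := hT.2.1 c hc (1, n) h1n hne
    omega
  have hcne : c ≠ (1, n) := by
    intro e; rw [e] at hci; exact absurd (show (1:ℕ) < 1 from hci) (by omega)
  rcases hal c hc with h | h | h
  · exact absurd h hcne
  · by_cases hc1 : c.1 - 1 = 1
    · by_cases he : (c.1 - 1, c.2 + 1) = (1, n)
      · have e3 : c.2 + 1 = n := congrArg Prod.snd he
        exact Or.inl (Prod.ext (by omega) (by omega))
      · have hd : c.1 - 1 ≠ 1 ∧ c.1 - 1 ≠ n ∧ c.2 + 1 ≠ 1 ∧ c.2 + 1 ≠ n :=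
          hT.2.1 _ h (1, n) h1n he
        omega
    · have hgt : 1 < c.1 - 1 := by omega
      have hc2' : c.2 + 1 ≤ n := by have := hT.1 _ h; omega
      have hc2'' : c.2 + 1 ≠ n := by
        intro e
        by_cases he : (c.1 - 1, c.2 + 1) = (1, n)
        · have e4 : c.1 - 1 = 1 := congrArg Prod.fst he
          omega
        · have hd : c.1 - 1 ≠ 1 ∧ c.1 - 1 ≠ n ∧ c.2 + 1 ≠ 1 ∧ c.2 + 1 ≠ n :=
            hT.2.1 _ h (1, n) h1n he
          omega
      refine Or.inr (Or.inl ?_)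
      have : (q.1 - 1, q.2 + 1) = ((c.1 - 1) - 1, (c.2 + 1) - 1) :=
        Prod.ext (by omega) (by omega)
      rw [this]
      exact mem_Tin.2 ⟨(c.1 - 1, c.2 + 1), h, by omega, by omega, by omega⟩
  · refine Or.inr (Or.inr ?_)
    have : (q.1 + 1, q.2 - 1) = ((c.1 + 1) - 1, (c.2 - 1) - 1) :=
      Prod.ext (by omega) (by omega)
    rw [this]
    exact mem_Tin.2 ⟨(c.1 + 1, c.2 - 1), h, by omega, by omega, by omega⟩



def Pw (w : List DB) : Prop := ∃ (n : ℕ) (S : Finset (ℕ × ℕ)),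
  1 ≤ n ∧ IsSecStr n S ∧ IsCanonical S ∧ w = dotBracket n S

def Qw (w : List DB) : Prop := ∃ (n : ℕ) (T : Finset (ℕ × ℕ)),
  1 ≤ n ∧ IsSecStr n T ∧ IsCanonical (enclose n T) ∧ w = dotBracket n T

lemma secstr_empty (n : ℕ) : IsSecStr n (∅ : Finset (ℕ × ℕ)) :=
  ⟨by simp, by simp, by simp⟩

lemma canonical_empty : IsCanonical (∅ : Finset (ℕ × ℕ)) := by
  intro p hp; simp at hp

lemma almost_of_canonical {n : ℕ} {X : Finset (ℕ × ℕ)} (h : IsCanonical X) :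
    AlmostCan n X := fun p hp => Or.inr (h p hp)

lemma bounds1 {n : ℕ} {S : Finset (ℕ × ℕ)} (h : IsSecStr n S) :
    ∀ p ∈ S, 1 ≤ p.1 ∧ 1 ≤ p.2 :=
  fun p hp => by have := h.1 p hp; omega

lemma fwd_dot : Pw [DB.dot] :=
  ⟨1, ∅, le_refl 1, secstr_empty 1, canonical_empty, by rw [dotBracket_empty]; rfl⟩

lemma fwd_app_dot (w : List DB) (h : Pw w) : Pw (w ++ [DB.dot]) := by
  obtain ⟨n, S, hn, hs, hc, rfl⟩ := h
  exact ⟨n + 1, S, by omega, secstr_mono (by omega) hs, hc,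
    (dotBracket_snoc n S (fun p hp => by have := hs.1 p hp; omega)).symm⟩

lemma fwd_wrapS (w : List DB) (h : Qw w) : Pw (DB.lpar :: w ++ [DB.rpar]) := by
  obtain ⟨n, T, hn, hs, hc, rfl⟩ := h
  exact ⟨n + 2, enclose n T, by omega, secstr_enclose hn hs, hc,
    by rw [dotBracket_enclose n T (fun p hp => by have := hs.1 p hp; omega)]⟩

lemma fwd_app_wrap (v w : List DB) (hv : Pw v) (hw : Qw w) :
    Pw (v ++ DB.lpar :: w ++ [DB.rpar]) := by
  obtain ⟨m, Sv, hm, hsv, hcv, rfl⟩ := hv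
  obtain ⟨k, Tw, hk, hsw, hcw, rfl⟩ := hw
  have hse := secstr_enclose hk hsw
  refine ⟨m + (k + 2), Sv ∪ shiftset m (enclose k Tw), by omega,
    secstr_union hsv hse,
    canonical_union hcv (canonical_shiftset (bounds1 hse) hcw), ?_⟩
  rw [dotBracket_union _ _ _ _ (fun p hp => by have := hsv.1 p hp; omega)
      (bounds1 hse),
    dotBracket_enclose k Tw (fun p hp => by have := hsw.1 p hp; omega)]
  simp only [List.append_assoc, List.cons_append]

lemma fwd_pdot : Qw [DB.lpar, DB.dot, DB.rpar] := by
  have hse : IsSecStr 3 (enclose 1 (∅ : Finset (ℕ × ℕ))) :=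
    secstr_enclose (le_refl 1) (secstr_empty 1)
  refine ⟨3, enclose 1 ∅, by omega, hse, ?_, ?_⟩
  · exact (enclose_canonical_iff hse).mpr
      ⟨Finset.mem_insert_self _ _, almost_enclose (by simp) canonical_empty⟩
  · rw [show (3 : ℕ) = 1 + 2 from rfl, dotBracket_enclose 1 ∅ (by simp),
      dotBracket_empty]
    rfl

lemma fwd_wrapR (w : List DB) (h : Qw w) : Qw (DB.lpar :: w ++ [DB.rpar]) := by
  obtain ⟨n, T, hn, hs, hc, rfl⟩ := h
  have hse := secstr_enclose hn hs
  refine ⟨n + 2, enclose n T, by omega, hse,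
    (enclose_canonical_iff hse).mpr
      ⟨Finset.mem_insert_self _ _, almost_of_canonical hc⟩,
    by rw [dotBracket_enclose n T (fun p hp => by have := hs.1 p hp; omega)]⟩

lemma fwd_swrap (v w : List DB) (hv : Pw v) (hw : Qw w) :
    Qw (DB.lpar :: (v ++ DB.lpar :: w ++ [DB.rpar]) ++ [DB.rpar]) := by
  obtain ⟨m, Sv, hm, hsv, hcv, rfl⟩ := hv
  obtain ⟨k, Tw, hk, hsw, hcw, rfl⟩ := hw
  have hse := secstr_enclose hk hsw
  have hU : IsSecStr (m + (k + 2)) (Sv ∪ shiftset m (enclose k Tw)) :=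
    secstr_union hsv hse
  have hUcan : IsCanonical (Sv ∪ shiftset m (enclose k Tw)) :=
    canonical_union hcv (canonical_shiftset (bounds1 hse) hcw)
  have hue := secstr_enclose (show 1 ≤ m + (k + 2) by omega) hU
  refine ⟨m + (k + 2) + 2, enclose (m + (k + 2)) (Sv ∪ shiftset m (enclose k Tw)),
    by omega, hue,
    (enclose_canonical_iff hue).mpr
      ⟨Finset.mem_insert_self _ _, almost_enclose (bounds1 hU) hUcan⟩, ?_⟩
  rw [dotBracket_enclose _ _ (fun p hp => by have := hU.1 p hp; omega),
    dotBracket_union _ _ _ _ (fun p hp => by have := hsv.1 p hp; omega) (bounds1 hse),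
    dotBracket_enclose k Tw (fun p hp => by have := hsw.1 p hp; omega)]
  simp only [List.append_assoc, List.cons_append]

lemma fwd_sdot (v : List DB) (hv : Pw v) : Qw (DB.lpar :: v ++ [DB.dot, DB.rpar]) := by
  obtain ⟨m, Sv, hm, hsv, hcv, rfl⟩ := hv
  have hs1 : IsSecStr (m + 1) Sv := secstr_mono (by omega) hsv
  have hse := secstr_enclose (show 1 ≤ m + 1 by omega) hs1
  refine ⟨m + 1 + 2, enclose (m + 1) Sv, by omega, hse,
    (enclose_canonical_iff hse).mpr
      ⟨Finset.mem_insert_self _ _, almost_enclose (bounds1 hsv) hcv⟩, ?_⟩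
  rw [dotBracket_enclose _ _ (fun p hp => by have := hs1.1 p hp; omega),
    dotBracket_snoc m Sv (fun p hp => by have := hsv.1 p hp; omega)]
  simp only [List.append_assoc, List.cons_append, List.nil_append]

lemma forward : (∀ w, GenS w → Pw w) ∧ (∀ w, GenR w → Qw w) :=
  ⟨fun _ h => GenS.rec (motive_1 := fun w _ => Pw w) (motive_2 := fun w _ => Qw w)
      fwd_dot (fun w _ ih => fwd_app_dot w ih) (fun w _ ih => fwd_wrapS w ih)
      (fun v w _ _ ihv ihw => fwd_app_wrap v w ihv ihw) fwd_pdot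
      (fun w _ ih => fwd_wrapR w ih) (fun v w _ _ ihv ihw => fwd_swrap v w ihv ihw)
      (fun v _ ih => fwd_sdot v ih) h,
   fun _ h => GenR.rec (motive_1 := fun w _ => Pw w) (motive_2 := fun w _ => Qw w)
      fwd_dot (fun w _ ih => fwd_app_dot w ih) (fun w _ ih => fwd_wrapS w ih)
      (fun v w _ _ ihv ihw => fwd_app_wrap v w ihv ihw) fwd_pdot
      (fun w _ ih => fwd_wrapR w ih) (fun v w _ _ ihv ihw => fwd_swrap v w ihv ihw)
      (fun v _ ih => fwd_sdot v ih) h⟩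

lemma backward (n : ℕ) :
    (∀ S, 1 ≤ n → IsSecStr n S → IsCanonical S → GenS (dotBracket n S)) ∧
    (∀ T, IsSecStr n T → IsCanonical (enclose n T) → GenR (dotBracket n T)) := by
  induction n using Nat.strong_induction_on with
  | _ n IH =>
  constructor
  · -- GenS part
    intro S hn hS hc
    by_cases hend : ∃ p ∈ S, p.2 = n
    · obtain ⟨p, hp, hp2⟩ := hend
      have hpin : (p.1, n) ∈ S := by rw [← hp2]; exact hp
      have hb : 1 ≤ p.1 ∧ p.1 + 1 < n ∧ n ≤ n := hS.1 _ hpin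
      by_cases h1 : p.1 = 1
      · rw [h1] at hpin
        have hword := word_eq hS hpin
        have hu : GenR (dotBracket (n - 1 - 1)
            ((S.filter fun q => 1 < q.1).image fun q => (q.1 - 1, q.2 - 1))) :=
          (IH (n - 1 - 1) (by omega)).2 _ (secstr_Tin hS hpin) (canTin hS hpin hc)
        have hz : dotBracket (1 - 1) (S.filter fun q => q.2 < 1) = [] := rfl
        rw [hword, hz, List.nil_append]
        exact GenS.wrap _ hu
      · have hword := word_eq hS hpin
        have hA : IsSecStr (p.1 - 1) (S.filter fun q => q.2 < p.1) :=
          secstr_of_subset hS (Finset.filter_subset _ _)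
            (fun q hq => by have := (Finset.mem_filter.1 hq).2; omega)
        have hv : GenS (dotBracket (p.1 - 1) (S.filter fun q => q.2 < p.1)) :=
          (IH (p.1 - 1) (by omega)).1 _ (by omega) hA (canA hS hpin hc)
        have hu : GenR (dotBracket (n - p.1 - 1)
            ((S.filter fun q => p.1 < q.1).image fun q => (q.1 - p.1, q.2 - p.1))) :=
          (IH (n - p.1 - 1) (by omega)).2 _ (secstr_Tin hS hpin) (canTin hS hpin hc)
        rw [hword, ← List.append_assoc]
        exact GenS.app_wrap _ _ hv hu
    · have hne1 : ∀ p ∈ S, p.2 ≠ n := fun p hp e => hend ⟨p, hp, e⟩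
      by_cases h1 : n = 1
      · subst h1
        have hSe : S = ∅ := Finset.eq_empty_of_forall_notMem
          (fun p hp => by have := hS.1 p hp; omega)
        rw [hSe, show dotBracket 1 (∅ : Finset (ℕ × ℕ)) = [DB.dot] from
          by rw [dotBracket_empty]; rfl]
        exact GenS.dot
      · have hS' : IsSecStr (n - 1) S := secstr_of_subset hS (Finset.Subset.refl S)
          (fun p hp => by have := hS.1 p hp; have := hne1 p hp; omega)
        have hv : GenS (dotBracket (n - 1) S) :=
          (IH (n - 1) (by omega)).1 _ (by omega) hS' hc
        have hsnoc := dotBracket_snoc (n - 1) S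
          (fun p hp => by have := hS'.1 p hp; omega)
        rw [show (n - 1) + 1 = n by omega] at hsnoc
        rw [hsnoc]
        exact GenS.app_dot _ hv
  · -- GenR part
    intro T hT hcan
    obtain ⟨h1n, hal⟩ := (enclose_canonical_iff hT).1 hcan
    have hbn : 1 ≤ 1 ∧ 1 + 1 < n ∧ n ≤ n := hT.1 _ h1n
    have hword := word_eq hT h1n
    have hz : dotBracket (1 - 1) (T.filter fun p => p.2 < 1) = [] := rfl
    rw [hword, hz, List.nil_append]
    have hsec₂ : IsSecStr (n - 1 - 1)
        ((T.filter fun p => 1 < p.1).image fun p => (p.1 - 1, p.2 - 1)) :=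
      secstr_Tin hT h1n
    have hal₂ : AlmostCan (n - 1 - 1)
        ((T.filter fun p => 1 < p.1).image fun p => (p.1 - 1, p.2 - 1)) :=
      almostTin hT h1n hal
    set T₂ := (T.filter fun p => 1 < p.1).image (fun p => (p.1 - 1, p.2 - 1)) with hT₂def
    by_cases hfull : (1, n - 1 - 1) ∈ T₂
    · exact GenR.wrap _ ((IH (n - 1 - 1) (by omega)).2 _ hsec₂
        ((enclose_canonical_iff hsec₂).mpr ⟨hfull, hal₂⟩))
    · have hcan₂ : IsCanonical T₂ := by
        intro p hp
        rcases hal₂ p hp with h | h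
        · exact absurd (h ▸ hp) hfull
        · exact h
      by_cases hend : ∃ p ∈ T₂, p.2 = n - 1 - 1
      · obtain ⟨p, hp, hp2⟩ := hend
        have hpin : (p.1, n - 1 - 1) ∈ T₂ := by rw [← hp2]; exact hp
        have hb2 : 1 ≤ p.1 ∧ p.1 + 1 < n - 1 - 1 ∧ n - 1 - 1 ≤ n - 1 - 1 := hsec₂.1 _ hpin
        have hne1 : p.1 ≠ 1 := by
          intro e; rw [e] at hpin; exact hfull hpin
        have hword₂ := word_eq hsec₂ hpin
        have hA : IsSecStr (p.1 - 1) (T₂.filter fun q => q.2 < p.1) :=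
          secstr_of_subset hsec₂ (Finset.filter_subset _ _)
            (fun q hq => by have := (Finset.mem_filter.1 hq).2; omega)
        have hv : GenS (dotBracket (p.1 - 1) (T₂.filter fun q => q.2 < p.1)) :=
          (IH (p.1 - 1) (by omega)).1 _ (by omega) hA (canA hsec₂ hpin hcan₂)
        have hu : GenR (dotBracket ((n - 1 - 1) - p.1 - 1)
            ((T₂.filter fun q => p.1 < q.1).image fun q => (q.1 - p.1, q.2 - p.1))) :=
          (IH ((n - 1 - 1) - p.1 - 1) (by omega)).2 _ (secstr_Tin hsec₂ hpin)
            (canTin hsec₂ hpin hcan₂)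
        rw [hword₂, ← List.append_assoc]
        exact GenR.swrap _ _ hv hu
      · by_cases h3 : n = 3
        · subst h3
          have hT₂e : T₂ = ∅ := Finset.eq_empty_of_forall_notMem
            (fun p hp => by have := hsec₂.1 p hp; omega)
          rw [hT₂e, show dotBracket (3 - 1 - 1) (∅ : Finset (ℕ × ℕ)) = [DB.dot] from
            by rw [dotBracket_empty]; rfl]
          exact GenR.pdot
        · have hs' : IsSecStr (n - 1 - 1 - 1) T₂ :=
            secstr_of_subset hsec₂ (Finset.Subset.refl _)
              (fun p hp => by
                have := hsec₂.1 p hp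
                have : p.2 ≠ n - 1 - 1 := fun e => hend ⟨p, hp, e⟩
                omega)
          have hv : GenS (dotBracket (n - 1 - 1 - 1) T₂) :=
            (IH (n - 1 - 1 - 1) (by omega)).1 _ (by omega) hs' hcan₂
          have hsnoc := dotBracket_snoc (n - 1 - 1 - 1) T₂
            (fun p hp => by have := hs'.1 p hp; omega)
          rw [show (n - 1 - 1 - 1) + 1 = n - 1 - 1 by omega] at hsnoc
          rw [hsnoc]
          simpa only [List.append_assoc, List.cons_append, List.nil_append]
            using GenR.sdot _ hv


/-- (1) `L(S)` is exactly the set of dot-bracket words of nonempty canonical secondary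
structures (θ = 1); (2) `L(R)` is exactly the set of dot-bracket words of nonempty
secondary structures `T` such that the structure obtained from `T` by adding one
enclosing base pair is canonical. -/
theorem grammar_generates_canonical :
    (∀ w : List DB, GenS w ↔ ∃ (n : ℕ) (S : Finset (ℕ × ℕ)),
        1 ≤ n ∧ IsSecStr n S ∧ IsCanonical S ∧ w = dotBracket n S) ∧
    (∀ w : List DB, GenR w ↔ ∃ (n : ℕ) (T : Finset (ℕ × ℕ)),
        1 ≤ n ∧ IsSecStr n T ∧ IsCanonical (enclose n T) ∧ w = dotBracket n T) := by
  constructor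
  · intro w
    constructor
    · exact fun h => forward.1 w h
    · rintro ⟨n, S, hn, hs, hc, rfl⟩
      exact (backward n).1 S hn hs hc
  · intro w
    constructor
    · exact fun h => forward.2 w h
    · rintro ⟨n, T, hn, hs, hc, rfl⟩
      exact (backward n).2 T hs hc
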